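/- Let G be a minimally nonperfectly divisible graph. Then every vertex v of G satisfies |N(v)| ≥ ω(G) + 1. -/

import Mathlib

open SimpleGraph

variable {V : Type}

/-- The clique number of the subgraph of `G` induced on `S`. -/
noncomputable def omegaOn (G : SimpleGraph V) (S : Set V) : ℕ :=
  sSup {n | ∃ s : Finset V, ↑s ⊆ S ∧ G.IsNClique n s}

/-- The subgraph of `G` induced on `S` is a perfect graph. -/
def IsPerfectOn (G : SimpleGraph V) (S : Set V) : Prop :=
  ∀ T : Set V, T ⊆ S → (G.induce T).chromaticNumber = (omegaOn G T : ℕ∞)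

/-- Every nonempty induced subgraph of `G[S]` admits a perfect division. -/
def PerfDivOn (G : SimpleGraph V) (S : Set V) : Prop :=
  ∀ H : Set V, H ⊆ S → H.Nonempty →
    ∃ A B : Set V, A ∪ B = H ∧ Disjoint A B ∧
      IsPerfectOn G A ∧ omegaOn G B < omegaOn G H

/-- `G` is minimally nonperfectly divisible. -/
def MNPD (G : SimpleGraph V) : Prop :=
  ¬ PerfDivOn G Set.univ ∧ ∀ S : Set V, S ≠ Set.univ → PerfDivOn G S

/-- The external neighbourhood `N(X)`. -/
def extNbhd (G : SimpleGraph V) (X : Set V) : Set V :=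
  {v | v ∉ X ∧ ∃ x ∈ X, G.Adj v x}

section Aux

variable [Fintype V] {G : SimpleGraph V}

lemma aux_bdd (G : SimpleGraph V) (S : Set V) :
    BddAbove {n | ∃ s : Finset V, ↑s ⊆ S ∧ G.IsNClique n s} := by
  refine ⟨Fintype.card V, fun n hn => ?_⟩
  obtain ⟨s, _, hs⟩ := hn
  exact hs.card_eq ▸ Finset.card_le_univ s

lemma aux_zero_mem (G : SimpleGraph V) (S : Set V) :
    (0 : ℕ) ∈ {n | ∃ s : Finset V, ↑s ⊆ S ∧ G.IsNClique n s} :=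
  ⟨∅, by simp, by simp⟩

lemma le_omegaOn {S : Set V} {n : ℕ} {s : Finset V}
    (h1 : ↑s ⊆ S) (h2 : G.IsNClique n s) : n ≤ omegaOn G S :=
  le_csSup (aux_bdd G S) ⟨s, h1, h2⟩

lemma exists_omega_clique (G : SimpleGraph V) (S : Set V) :
    ∃ s : Finset V, ↑s ⊆ S ∧ G.IsNClique (omegaOn G S) s :=
  Nat.sSup_mem ⟨0, aux_zero_mem G S⟩ (aux_bdd G S)

lemma omegaOn_mono {S T : Set V} (h : S ⊆ T) : omegaOn G S ≤ omegaOn G T := by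
  obtain ⟨s, hs, hc⟩ := exists_omega_clique G S
  exact le_omegaOn (hs.trans h) hc

lemma omegaOn_empty (G : SimpleGraph V) : omegaOn G (∅ : Set V) = 0 := by
  refine le_antisymm (csSup_le ⟨0, aux_zero_mem G ∅⟩ ?_) (Nat.zero_le _)
  rintro n ⟨s, hs, hc⟩
  have : s = ∅ := by
    rw [← Finset.coe_eq_empty]
    exact Set.subset_empty_iff.mp hs
  subst this
  simpa using hc.card_eq.symm

lemma omegaOn_le_chrom (G : SimpleGraph V) (T : Set V) :
    (omegaOn G T : ℕ∞) ≤ (G.induce T).chromaticNumber := by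
  classical
  obtain ⟨s, hs, hc⟩ := exists_omega_clique G T
  let f : {x // x ∈ s} ↪ T :=
    ⟨fun x => ⟨x.1, hs x.2⟩, by rintro ⟨a, ha⟩ ⟨b, hb⟩ hab; simpa [Subtype.ext_iff] using hab⟩
  let s' : Finset T := s.attach.map f
  have hclique : (G.induce T).IsClique ↑s' := by
    rintro ⟨a, haT⟩ ha ⟨b, hbT⟩ hb hne
    simp only [s', f, Finset.coe_map, Set.mem_image, Finset.mem_coe, Finset.mem_attach,
      Function.Embedding.coeFn_mk] at ha hb
    obtain ⟨⟨a', ha'⟩, -, heqa⟩ := ha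
    obtain ⟨⟨b', hb'⟩, -, heqb⟩ := hb
    have haa : a' = a := congrArg Subtype.val heqa
    have hbb : b' = b := congrArg Subtype.val heqb
    subst haa; subst hbb
    have : G.Adj a' b' := hc.isClique ha' hb' (by simpa [Subtype.ext_iff] using hne)
    exact this
  have hcard : s'.card = omegaOn G T := by
    simp [s', hc.card_eq]
  simpa [hcard] using hclique.card_le_chromaticNumber

lemma omegaOn_pos {S : Set V} {x : V} (hx : x ∈ S) : 1 ≤ omegaOn G S := by
  refine le_omegaOn (s := {x}) (by simpa using hx) ?_
  exact isNClique_singleton.mpr rfl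

/-- Adding to a perfect set a vertex with at most one neighbour inside keeps it perfect. -/
lemma perfect_insert {A : Set V} {v : V}
    (hv : v ∉ A) (hA : IsPerfectOn G A)
    (hN : (A ∩ G.neighborSet v).Subsingleton) :
    IsPerfectOn G (A ∪ {v}) := by
  classical
  intro T hT
  by_cases hvT : v ∈ T
  swap
  · refine hA T (fun x hx => ?_)
    rcases hT hx with h | h
    · exact h
    · exact absurd (h ▸ hx) hvT
  · set T' : Set V := T \ {v} with hT'def
    have hT'A : T' ⊆ A := by
      rintro x ⟨hx1, hx2⟩
      rcases hT hx1 with h | h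
      · exact h
      · exact absurd h hx2
    have h1 : (G.induce T').chromaticNumber = (omegaOn G T' : ℕ∞) := hA T' hT'A
    set n := omegaOn G T with hn
    have hT'T : T' ⊆ T := Set.diff_subset
    have hmono : omegaOn G T' ≤ n := omegaOn_mono hT'T
    have hn1 : 1 ≤ n := omegaOn_pos hvT
    -- get a coloring of T' with n colors
    have hcolT' : (G.induce T').Colorable n := by
      rw [← chromaticNumber_le_iff_colorable, h1]
      exact_mod_cast hmono
    obtain ⟨c⟩ := hcolT'
    -- find a color for v avoiding its (at most one) neighbour
    have hd : ∃ d : Fin n, ∀ x : T', G.Adj v ↑x → c x ≠ d := by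
      by_cases hnb : ∃ u : V, ∃ h : u ∈ T', G.Adj v u
      · obtain ⟨u, hu, huv⟩ := hnb
        have hn2 : 2 ≤ n := by
          refine le_omegaOn (s := {v, u}) ?_ ?_
          · intro x hx
            simp only [Finset.coe_insert, Finset.coe_singleton, Set.mem_insert_iff,
              Set.mem_singleton_iff] at hx
            rcases hx with rfl | rfl
            · exact hvT
            · exact hT'T hu
          · constructor
            · intro a ha b hb hab
              simp only [Finset.coe_insert, Finset.coe_singleton, Set.mem_insert_iff,
                Set.mem_singleton_iff] at ha hb
              rcases ha with rfl | rfl <;> rcases hb with rfl | rfl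
              · exact absurd rfl hab
              · exact huv
              · exact huv.symm
              · exact absurd rfl hab
            · rw [Finset.card_insert_of_notMem (by simp [huv.ne]), Finset.card_singleton]
        obtain ⟨d, hdne⟩ := Fintype.exists_ne_of_one_lt_card
          (by simpa using lt_of_lt_of_le one_lt_two hn2) (c ⟨u, hu⟩)
        refine ⟨d, fun x hx => ?_⟩
        have hxu : x = (⟨u, hu⟩ : T') := by
          have hxA : (x : V) ∈ A ∩ G.neighborSet v := ⟨hT'A x.2, hx⟩
          have huA : u ∈ A ∩ G.neighborSet v := ⟨hT'A hu, huv⟩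
          exact Subtype.ext (hN hxA huA)
        rw [hxu]
        exact fun h => hdne h.symm
      · push_neg at hnb
        refine ⟨⟨0, hn1⟩, fun x hx => absurd hx (hnb x x.2)⟩
    obtain ⟨d, hd⟩ := hd
    have hcol : (G.induce T).Colorable n := by
      refine ⟨SimpleGraph.Coloring.mk
        (fun x => if h : (x : V) = v then d else c ⟨x, x.2, h⟩) ?_⟩
      rintro ⟨x, hx⟩ ⟨y, hy⟩ hadj
      have hxy : G.Adj x y := hadj
      by_cases hxv : x = v <;> by_cases hyv : y = v
      · exact absurd (hxv.trans hyv.symm) hxy.ne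
      · subst hxv
        simp only [dif_pos rfl, dif_neg hyv]
        exact fun h => hd ⟨y, hy, hyv⟩ hxy h.symm
      · subst hyv
        simp only [dif_pos rfl, dif_neg hxv]
        exact hd ⟨x, hx, hxv⟩ hxy.symm
      · simp only [dif_neg hxv, dif_neg hyv]
        have : (G.induce T').Adj ⟨x, hx, hxv⟩ ⟨y, hy, hyv⟩ := hxy
        exact c.valid this
    refine le_antisymm ?_ (omegaOn_le_chrom G T)
    exact le_trans hcol.chromaticNumber_le (by exact_mod_cast le_refl n)

lemma perfect_empty (G : SimpleGraph V) : IsPerfectOn G (∅ : Set V) := by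
  intro T hT
  have hTe : T = ∅ := Set.subset_empty_iff.mp hT
  subst hTe
  haveI : IsEmpty (↥(∅ : Set V)) := by
    simp only [Set.isEmpty_coe_sort]
  rw [chromaticNumber_eq_zero_of_isEmpty, omegaOn_empty]
  simp

end Aux

theorem stmt_9 [Fintype V] (G : SimpleGraph V) (hG : MNPD G) :
    ∀ v : V, omegaOn G Set.univ + 1 ≤ (G.neighborSet v).ncard := by
  classical
  intro v
  by_contra hdeg
  push_neg at hdeg
  have hdeg' : (G.neighborSet v).ncard ≤ omegaOn G Set.univ := Nat.lt_succ_iff.mp hdeg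
  apply hG.1
  intro H _ hne
  by_cases hH : H = Set.univ
  swap
  · exact hG.2 H hH H subset_rfl hne
  subst hH
  set ω := omegaOn G (Set.univ : Set V) with hω
  have hω1 : 1 ≤ ω := omegaOn_pos (Set.mem_univ v)
  by_cases hsmall : ({v}ᶜ : Set V) = ∅
  · -- V = {v}
    have huniv : (Set.univ : Set V) = (∅ : Set V) ∪ {v} := by
      ext x
      simp only [Set.mem_univ, Set.empty_union, Set.mem_singleton_iff, true_iff]
      by_contra hx
      have : x ∈ ({v}ᶜ : Set V) := hx
      rw [hsmall] at this
      exact this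
    refine ⟨Set.univ, ∅, by simp, by simp, ?_, ?_⟩
    · rw [huniv]
      exact perfect_insert (by simp) (perfect_empty G) (by simp)
    · rw [omegaOn_empty]
      exact hω1
  · have hvne : ({v}ᶜ : Set V) ≠ Set.univ := by
      intro h
      have : v ∈ ({v}ᶜ : Set V) := h ▸ Set.mem_univ v
      exact this rfl
    obtain ⟨A, B, hAB, hdisj, hA, hB⟩ :=
      hG.2 {v}ᶜ hvne {v}ᶜ subset_rfl (Set.nonempty_iff_ne_empty.mpr hsmall)
    have hBlt : omegaOn G B < ω := lt_of_lt_of_le hB (omegaOn_mono (Set.subset_univ _))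
    have hvA : v ∉ A := by
      intro h
      have : v ∈ ({v}ᶜ : Set V) := hAB ▸ Set.mem_union_left B h
      exact this rfl
    have hvB : v ∉ B := by
      intro h
      have : v ∈ ({v}ᶜ : Set V) := hAB ▸ Set.mem_union_right A h
      exact this rfl
    by_cases hcase : omegaOn G (B ∪ {v}) < ω
    · refine ⟨A, B ∪ {v}, ?_, ?_, hA, hcase⟩
      · rw [← Set.union_assoc, hAB, Set.compl_union_self]
      · rw [Set.disjoint_union_right]
        exact ⟨hdisj, Set.disjoint_singleton_right.mpr hvA⟩
    · push_neg at hcase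
      have hBv : omegaOn G (B ∪ {v}) = ω :=
        le_antisymm (omegaOn_mono (Set.subset_univ _)) hcase
      obtain ⟨K, hKsub, hK⟩ := exists_omega_clique G (B ∪ {v})
      rw [hBv] at hK
      have hvK : v ∈ K := by
        by_contra hvK
        have hKB : ↑K ⊆ B := by
          intro x hx
          rcases hKsub hx with h | h
          · exact h
          · exact absurd ((Set.mem_singleton_iff.mp h) ▸ hx) (by simpa using hvK)
        exact absurd (le_omegaOn hKB hK) (not_le_of_gt hBlt)
      -- K minus v is a clique of size ω - 1 inside B ∩ N(v)
      set F : Finset V := K.erase v with hF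
      have hFcard : F.card = ω - 1 := by
        rw [hF, Finset.card_erase_of_mem hvK, hK.card_eq]
      have hFB : ↑F ⊆ B := by
        intro x hx
        simp only [hF, Finset.coe_erase, Set.mem_diff, Finset.mem_coe,
          Set.mem_singleton_iff] at hx
        rcases hKsub hx.1 with h | h
        · exact h
        · exact absurd h hx.2
      have hFN : ↑F ⊆ G.neighborSet v := by
        intro x hx
        simp only [hF, Finset.coe_erase, Set.mem_diff, Finset.mem_coe,
          Set.mem_singleton_iff] at hx
        exact hK.isClique (Finset.mem_coe.mpr hvK) hx.1 (fun h => hx.2 h.symm)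
      have hdiffcard : (G.neighborSet v \ ↑F).ncard ≤ 1 := by
        have h1 : (G.neighborSet v \ ↑F).ncard
            = (G.neighborSet v).ncard - (↑F : Set V).ncard :=
          Set.ncard_diff hFN (Set.toFinite _)
        have h2 : (↑F : Set V).ncard = ω - 1 := by
          rw [Set.ncard_coe_finset, hFcard]
        omega
      have hsub : (A ∩ G.neighborSet v).Subsingleton := by
        intro a ha b hb
        have haD : a ∈ G.neighborSet v \ ↑F := by
          refine ⟨ha.2, fun h => ?_⟩
          exact Set.disjoint_left.mp hdisj ha.1 (hFB h)
        have hbD : b ∈ G.neighborSet v \ ↑F := by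
          refine ⟨hb.2, fun h => ?_⟩
          exact Set.disjoint_left.mp hdisj hb.1 (hFB h)
        exact (Set.ncard_le_one (Set.toFinite _)).mp hdiffcard a haD b hbD
      refine ⟨A ∪ {v}, B, ?_, ?_, perfect_insert hvA hA hsub, hBlt⟩
      · rw [Set.union_right_comm, hAB, Set.compl_union_self]
      · rw [Set.disjoint_union_left]
        exact ⟨hdisj, Set.disjoint_singleton_left.mpr hvB⟩
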